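/- Let (ĝ_k) be non-negative with ĝ_k = 0 for k < 2l, and suppose ĝ_k ≤ D K^k for 2l ≤ k ≤ N_G where D > 0, K > M > 0, and suppose for all n ≥ N_G: ĝ_{n+1} ≤ A Σ_{k=1}^{n} â_k â_{n+1−k} + 2 Σ_{k=2}^{n+2−2l} k â_k ĝ_{n+2−k}, where â_k ≤ C M^k for k > n₀ and â_k arbitrary non-negative for k ≤ n₀. If Ψ(N_G) < 1, where Ψ(n) := A(2Σ_{k=1}^{n₀} â_k M^{−k} + C(n−2n₀))·(C/D)·(M/K)^{n+1} + 2(Σ_{k=2}^{n₀} k â_k K^{1−k} + C M (M/K)^{n₀}·((n₀+1)−n₀(M/K))/(1−M/K)²), and Ψ is decreasing in n, then ĝ_k ≤ D K^k for all k, and Σ ĝ_k x^k converges for |x| < 1/K. -/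

import Mathlib

open Finset

private lemma tail_sum (r : ℝ) (hr0 : 0 < r) (hr1 : r < 1) (n0 m : ℕ) :
    ∑ k ∈ Icc (n0+1) m, (k:ℝ) * r^k ≤ r^(n0+1) * (((n0:ℝ)+1) - (n0:ℝ)*r) / (1-r)^2 := by
  have h1r : (0:ℝ) < 1 - r := by linarith
  have hnorm : ‖r‖ < 1 := by rw [Real.norm_eq_abs, abs_of_pos hr0]; exact hr1
  have hs1 : Summable (fun j : ℕ => (j:ℝ) * r ^ j) := by
    simpa using summable_pow_mul_geometric_of_norm_lt_one 1 hnorm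
  have hs2 : Summable (fun j : ℕ => ((n0:ℝ)+1) * r ^ j) :=
    (summable_geometric_of_lt_one hr0.le hr1).mul_left _
  have hs : Summable (fun j : ℕ => (((j:ℝ) + ((n0:ℝ)+1)) * r ^ j) * r^(n0+1)) := by
    exact ((hs1.add hs2).congr (by intro j; ring)).mul_right _
  have hre : ∑ k ∈ Icc (n0+1) m, (k:ℝ) * r^k
      = ∑ j ∈ range (m - n0), (((j:ℝ) + ((n0:ℝ)+1)) * r ^ j) * r^(n0+1) := by
    refine Finset.sum_nbij' (fun k => k - (n0+1)) (fun j => j + (n0+1)) ?_ ?_ ?_ ?_ ?_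
    · intro k hk; simp only [mem_Icc] at hk; simp only [mem_range]; omega
    · intro j hj; simp only [mem_range] at hj; simp only [mem_Icc]; omega
    · intro k hk; simp only [mem_Icc] at hk; show k - (n0+1) + (n0+1) = k; omega
    · intro j hj; simp
    · intro k hk; simp only [mem_Icc] at hk
      obtain ⟨j, rfl⟩ : ∃ j, k = j + (n0+1) := ⟨k - (n0+1), by omega⟩
      simp only [Nat.add_sub_cancel]
      push_cast
      ring
  rw [hre]
  calc ∑ j ∈ range (m - n0), (((j:ℝ) + ((n0:ℝ)+1)) * r ^ j) * r^(n0+1)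
      ≤ ∑' j : ℕ, (((j:ℝ) + ((n0:ℝ)+1)) * r ^ j) * r^(n0+1) := by
        refine Summable.sum_le_tsum _ (fun j _ => ?_) hs
        have : (0:ℝ) ≤ (j:ℝ) + ((n0:ℝ)+1) := by positivity
        positivity
    _ = r^(n0+1) * (((n0:ℝ)+1) - (n0:ℝ)*r) / (1-r)^2 := by
        rw [tsum_mul_right]
        have : ∑' j : ℕ, ((j:ℝ) + ((n0:ℝ)+1)) * r ^ j
            = r / (1-r)^2 + ((n0:ℝ)+1) * (1-r)⁻¹ := by
          rw [show (fun j : ℕ => ((j:ℝ) + ((n0:ℝ)+1)) * r ^ j)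
              = fun j : ℕ => (j:ℝ) * r ^ j + ((n0:ℝ)+1) * r ^ j from by funext j; ring,
            Summable.tsum_add hs1 hs2, tsum_coe_mul_geometric_of_norm_lt_one hnorm,
            tsum_mul_left, tsum_geometric_of_lt_one hr0.le hr1]
        rw [this]
        field_simp
        ring

theorem stmt_15 (g a : ℕ → ℝ) (hg : ∀ k, 0 ≤ g k) (ha : ∀ k, 0 ≤ a k)
    (l n0 NG : ℕ) (hl : 2 ≤ l) (hn0NG : 2 * n0 < NG) (hNGl : 2 * l < NG)
    (A C D M K : ℝ) (hA : 0 < A) (hC : 0 < C) (hD : 0 < D) (hM : 0 < M) (hMK : M < K)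
    (hgflat : ∀ k, k < 2 * l → g k = 0)
    (hginit : ∀ k, 2 * l ≤ k → k ≤ NG → g k ≤ D * K ^ k)
    (haC : ∀ k, n0 < k → a k ≤ C * M ^ k)
    (hrec : ∀ n, NG ≤ n →
      g (n + 1) ≤ A * ∑ k ∈ Icc 1 n, a k * a (n + 1 - k) +
        2 * ∑ k ∈ Icc 2 (n + 2 - 2 * l), (k : ℝ) * a k * g (n + 2 - k))
    (Ψ : ℕ → ℝ)
    (hΨdef : ∀ n : ℕ, Ψ n =
      A * ((2 * ∑ k ∈ Icc 1 n0, a k * (M : ℝ)⁻¹ ^ k + C * ((n : ℝ) - 2 * n0)) *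
        (C / D) * (M / K) ^ (n + 1)) +
      2 * (∑ k ∈ Icc 2 n0, (k : ℝ) * a k * K ^ (1 - (k : ℤ)) +
        C * M * (M / K) ^ n0 *
          (((n0 : ℝ) + 1) - (n0 : ℝ) * (M / K)) / (1 - M / K) ^ 2))
    (hΨdec : ∀ n m : ℕ, NG ≤ n → n ≤ m → Ψ m ≤ Ψ n)
    (hkey : Ψ NG < 1) :
    (∀ k, g k ≤ D * K ^ k) ∧
    ∀ x : ℝ, |x| < 1 / K → Summable (fun k : ℕ => g k * x ^ k) := by
  have hK : 0 < K := hM.trans hMK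
  have hKne : K ≠ 0 := hK.ne'
  have hMne : M ≠ 0 := hM.ne'
  have hr0 : 0 < M / K := div_pos hM hK
  have hr1 : M / K < 1 := (div_lt_one hK).2 hMK
  have h1r : (0:ℝ) < 1 - M / K := by linarith
  have key : ∀ k, g k ≤ D * K ^ k := by
    intro k
    induction k using Nat.strong_induction_on with
    | _ k ih =>
      rcases le_or_gt k NG with hkNG | hkNG
      · rcases lt_or_ge k (2*l) with h2 | h2
        · rw [hgflat k h2]; positivity
        · exact hginit k h2 hkNG
      · obtain ⟨n, rfl, hn⟩ : ∃ n, k = n + 1 ∧ NG ≤ n := ⟨k-1, by omega, by omega⟩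
        have hIH : ∀ j, j ≤ n → g j ≤ D * K ^ j := fun j hj => ih j (by omega)
        have hn2 : 2 * n0 < n := by omega
        set S : ℝ := ∑ k ∈ Icc 1 n0, a k * (M:ℝ)⁻¹ ^ k with hS
        -- useful power identity
        have hMpow : ∀ j : ℕ, j ≤ n + 1 → (M:ℝ) ^ (n + 1 - j) = M ^ (n+1) * (M⁻¹) ^ j := by
          intro j hj
          rw [pow_sub₀ M hMne hj, inv_pow]
        -- Part 1
        have part1 : ∑ k ∈ Icc 1 n, a k * a (n + 1 - k)
            ≤ (2 * S + C * ((n:ℝ) - 2 * n0)) * C * M ^ (n+1) := by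
          have hsplit : Icc 1 n = (Icc 1 n0 ∪ Icc (n0+1) (n - n0)) ∪ Icc (n - n0 + 1) n := by
            ext k; simp only [mem_union, mem_Icc]; omega
          have hd1 : Disjoint (Icc 1 n0) (Icc (n0+1) (n - n0)) := by
            rw [Finset.disjoint_left]; intro x hx hx'
            simp only [mem_Icc] at hx hx'; omega
          have hd2 : Disjoint (Icc 1 n0 ∪ Icc (n0+1) (n - n0)) (Icc (n - n0 + 1) n) := by
            rw [Finset.disjoint_left]; intro x hx hx'
            simp only [mem_union, mem_Icc] at hx hx'; omega
          rw [hsplit, Finset.sum_union hd2, Finset.sum_union hd1]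
          have b1 : ∑ k ∈ Icc 1 n0, a k * a (n + 1 - k) ≤ C * M ^ (n+1) * S := by
            rw [hS, Finset.mul_sum]
            refine Finset.sum_le_sum fun k hk => ?_
            simp only [mem_Icc] at hk
            have h1 : a (n + 1 - k) ≤ C * M ^ (n + 1 - k) := haC _ (by omega)
            have h2 : (M:ℝ) ^ (n + 1 - k) = M ^ (n+1) * (M⁻¹) ^ k := hMpow k (by omega)
            calc a k * a (n + 1 - k) ≤ a k * (C * M ^ (n + 1 - k)) :=
                  mul_le_mul_of_nonneg_left h1 (ha k)
              _ = C * M ^ (n+1) * (a k * M⁻¹ ^ k) := by rw [h2]; ring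
          have b2 : ∑ k ∈ Icc (n0+1) (n - n0), a k * a (n + 1 - k)
              ≤ ((n:ℝ) - 2 * n0) * (C^2 * M ^ (n+1)) := by
            have hcard : ((Icc (n0+1) (n - n0)).card : ℝ) = (n:ℝ) - 2 * n0 := by
              rw [Nat.card_Icc]
              have : n - n0 + 1 - (n0 + 1) = n - 2 * n0 := by omega
              rw [this]
              push_cast [Nat.cast_sub (by omega : 2 * n0 ≤ n)]
              ring
            calc ∑ k ∈ Icc (n0+1) (n - n0), a k * a (n + 1 - k)
                ≤ ∑ k ∈ Icc (n0+1) (n - n0), C^2 * M ^ (n+1) := by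
                  refine Finset.sum_le_sum fun k hk => ?_
                  simp only [mem_Icc] at hk
                  have h1 : a k ≤ C * M ^ k := haC _ (by omega)
                  have h2 : a (n + 1 - k) ≤ C * M ^ (n + 1 - k) := haC _ (by omega)
                  have h3 : (M:ℝ) ^ k * M ^ (n + 1 - k) = M ^ (n+1) := by
                    rw [← pow_add]; congr 1; omega
                  calc a k * a (n + 1 - k) ≤ (C * M ^ k) * (C * M ^ (n + 1 - k)) :=
                        mul_le_mul h1 h2 (ha _) (by positivity)
                    _ = C^2 * (M ^ k * M ^ (n + 1 - k)) := by ring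
                    _ = C^2 * M ^ (n+1) := by rw [h3]
              _ = ((n:ℝ) - 2 * n0) * (C^2 * M ^ (n+1)) := by
                  rw [Finset.sum_const, nsmul_eq_mul, hcard]
          have b3 : ∑ k ∈ Icc (n - n0 + 1) n, a k * a (n + 1 - k) ≤ C * M ^ (n+1) * S := by
            have hre : ∑ k ∈ Icc (n - n0 + 1) n, a k * a (n + 1 - k)
                = ∑ j ∈ Icc 1 n0, a (n + 1 - j) * a j := by
              refine Finset.sum_nbij' (fun k => n + 1 - k) (fun j => n + 1 - j) ?_ ?_ ?_ ?_ ?_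
              · intro k hk; simp only [mem_Icc] at hk ⊢; omega
              · intro j hj; simp only [mem_Icc] at hj ⊢; omega
              · intro k hk; simp only [mem_Icc] at hk; show n + 1 - (n + 1 - k) = k; omega
              · intro j hj; simp only [mem_Icc] at hj; show n + 1 - (n + 1 - j) = j; omega
              · intro k hk; simp only [mem_Icc] at hk
                have : n + 1 - (n + 1 - k) = k := by omega
                rw [this]
            rw [hre, hS, Finset.mul_sum]
            refine Finset.sum_le_sum fun j hj => ?_
            simp only [mem_Icc] at hj
            have h1 : a (n + 1 - j) ≤ C * M ^ (n + 1 - j) := haC _ (by omega)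
            have h2 : (M:ℝ) ^ (n + 1 - j) = M ^ (n+1) * (M⁻¹) ^ j := hMpow j (by omega)
            calc a (n + 1 - j) * a j ≤ (C * M ^ (n + 1 - j)) * a j :=
                  mul_le_mul_of_nonneg_right h1 (ha _)
              _ = C * M ^ (n+1) * (a j * M⁻¹ ^ j) := by rw [h2]; ring
          nlinarith [b1, b2, b3]
        -- Part 2
        set T : ℝ := ∑ k ∈ Icc 2 n0, (k : ℝ) * a k * K ^ (1 - (k : ℤ)) +
            C * M * (M / K) ^ n0 * (((n0 : ℝ) + 1) - (n0 : ℝ) * (M / K)) / (1 - M / K) ^ 2 with hT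
        have hKpow : ∀ k : ℕ, k ≤ n + 2 → (K:ℝ) ^ (n + 2 - k) = K ^ (n+1) * K ^ (1 - (k:ℤ)) := by
          intro k hk
          have h1 : ((n + 2 - k : ℕ) : ℤ) = ((n+1 : ℕ) : ℤ) + (1 - (k:ℤ)) := by
            push_cast [Nat.cast_sub hk]; ring
          calc (K:ℝ) ^ (n + 2 - k) = K ^ (((n + 2 - k : ℕ)) : ℤ) := (zpow_natCast K _).symm
            _ = K ^ (((n+1:ℕ)):ℤ) * K ^ (1 - (k:ℤ)) := by rw [h1, zpow_add₀ hKne]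
            _ = K ^ (n+1) * K ^ (1 - (k:ℤ)) := by rw [zpow_natCast]
        have part2 : ∑ k ∈ Icc 2 (n + 2 - 2 * l), (k : ℝ) * a k * g (n + 2 - k)
            ≤ D * K ^ (n+1) * T := by
          set m := n + 2 - 2 * l with hm
          set p := max (n0 + 1) 2 with hp
          have hcover : Icc 2 m ⊆ Icc 2 n0 ∪ Icc p m := by
            intro k hk
            simp only [mem_Icc, mem_union] at hk ⊢; omega
          have hdisj : Disjoint (Icc 2 n0) (Icc p m) := by
            rw [Finset.disjoint_left]; intro x hx hx'
            simp only [mem_Icc] at hx hx'; omega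
          have step1 : ∑ k ∈ Icc 2 m, (k : ℝ) * a k * g (n + 2 - k)
              ≤ ∑ k ∈ Icc 2 n0, (k : ℝ) * a k * g (n + 2 - k)
                + ∑ k ∈ Icc p m, (k : ℝ) * a k * g (n + 2 - k) := by
            rw [← Finset.sum_union hdisj]
            refine Finset.sum_le_sum_of_subset_of_nonneg hcover fun k _ _ => ?_
            have := ha k; have := hg (n + 2 - k); positivity
          have b1 : ∑ k ∈ Icc 2 n0, (k : ℝ) * a k * g (n + 2 - k)
              ≤ D * K ^ (n+1) * ∑ k ∈ Icc 2 n0, (k : ℝ) * a k * K ^ (1 - (k:ℤ)) := by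
            rw [Finset.mul_sum]
            refine Finset.sum_le_sum fun k hk => ?_
            simp only [mem_Icc] at hk
            have hgb : g (n + 2 - k) ≤ D * K ^ (n + 2 - k) := hIH _ (by omega)
            have hKp := hKpow k (by omega)
            calc (k : ℝ) * a k * g (n + 2 - k) ≤ (k : ℝ) * a k * (D * K ^ (n + 2 - k)) := by
                  refine mul_le_mul_of_nonneg_left hgb ?_
                  have := ha k; positivity
              _ = D * K ^ (n+1) * ((k : ℝ) * a k * K ^ (1 - (k:ℤ))) := by rw [hKp]; ring
          have b2 : ∑ k ∈ Icc p m, (k : ℝ) * a k * g (n + 2 - k)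
              ≤ D * K ^ (n+1)
                * (C * M * (M / K) ^ n0 * (((n0 : ℝ) + 1) - (n0 : ℝ) * (M / K)) / (1 - M / K) ^ 2) := by
            have t1 : ∑ k ∈ Icc p m, (k : ℝ) * a k * g (n + 2 - k)
                ≤ ∑ k ∈ Icc p m, (D * K ^ (n+1) * (C * K)) * ((k:ℝ) * (M / K) ^ k) := by
              refine Finset.sum_le_sum fun k hk => ?_
              simp only [mem_Icc, hp, le_max_iff, max_le_iff] at hk
              have hk2 : 2 ≤ k := by omega
              have hkn0 : n0 < k := by omega
              have hgb : g (n + 2 - k) ≤ D * K ^ (n + 2 - k) := hIH _ (by omega)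
              have hab : a k ≤ C * M ^ k := haC _ hkn0
              have hKp := hKpow k (by omega)
              have hz : (K:ℝ) ^ (1 - (k:ℤ)) = K * (K ^ k)⁻¹ := by
                rw [zpow_sub₀ hKne, zpow_one, zpow_natCast]
                ring
              calc (k : ℝ) * a k * g (n + 2 - k)
                  ≤ (k : ℝ) * (C * M ^ k) * (D * K ^ (n + 2 - k)) := by
                    refine mul_le_mul ?_ hgb (hg _) ?_
                    · refine mul_le_mul_of_nonneg_left hab (by positivity)
                    · positivity
                _ = (D * K ^ (n+1) * (C * K)) * ((k:ℝ) * (M / K) ^ k) := by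
                    rw [hKp, hz, div_pow]
                    field_simp
            have t2 : ∑ k ∈ Icc p m, (k:ℝ) * (M / K) ^ k
                ≤ (M / K) ^ (n0+1) * (((n0:ℝ)+1) - (n0:ℝ) * (M / K)) / (1 - M / K) ^ 2 := by
              refine le_trans ?_ (tail_sum (M / K) hr0 hr1 n0 m)
              refine Finset.sum_le_sum_of_subset_of_nonneg ?_ fun k _ _ => by positivity
              intro k hk; simp only [mem_Icc, hp, max_le_iff] at hk ⊢; omega
            calc ∑ k ∈ Icc p m, (k : ℝ) * a k * g (n + 2 - k)
                ≤ ∑ k ∈ Icc p m, (D * K ^ (n+1) * (C * K)) * ((k:ℝ) * (M / K) ^ k) := t1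
              _ = (D * K ^ (n+1) * (C * K)) * ∑ k ∈ Icc p m, (k:ℝ) * (M / K) ^ k := by
                  rw [Finset.mul_sum]
              _ ≤ (D * K ^ (n+1) * (C * K))
                  * ((M / K) ^ (n0+1) * (((n0:ℝ)+1) - (n0:ℝ) * (M / K)) / (1 - M / K) ^ 2) := by
                  refine mul_le_mul_of_nonneg_left t2 (by positivity)
              _ = D * K ^ (n+1)
                  * (C * M * (M / K) ^ n0 * (((n0 : ℝ) + 1) - (n0 : ℝ) * (M / K)) / (1 - M / K) ^ 2) := by
                  rw [pow_succ]
                  have hKM : K * (M / K) = M := by field_simp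
                  linear_combination (D * K ^ (n+1) * C * (M / K) ^ n0 *
                    (((n0:ℝ) + 1) - (n0:ℝ) * (M / K)) / (1 - M / K) ^ 2) * hKM
          calc ∑ k ∈ Icc 2 m, (k : ℝ) * a k * g (n + 2 - k)
              ≤ ∑ k ∈ Icc 2 n0, (k : ℝ) * a k * g (n + 2 - k)
                + ∑ k ∈ Icc p m, (k : ℝ) * a k * g (n + 2 - k) := step1
            _ ≤ D * K ^ (n+1) * ∑ k ∈ Icc 2 n0, (k : ℝ) * a k * K ^ (1 - (k:ℤ))
                + D * K ^ (n+1)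
                  * (C * M * (M / K) ^ n0 * (((n0 : ℝ) + 1) - (n0 : ℝ) * (M / K)) / (1 - M / K) ^ 2) :=
                add_le_add b1 b2
            _ = D * K ^ (n+1) * T := by rw [hT]; ring
        -- combine
        have hexp : Ψ n * (D * K ^ (n+1))
            = A * ((2 * S + C * ((n:ℝ) - 2 * n0)) * C * M ^ (n+1)) + 2 * (D * K ^ (n+1) * T) := by
          rw [hΨdef n, hT, hS]
          have hMK1 : (M / K) ^ (n+1) * K ^ (n+1) = M ^ (n+1) := by
            rw [div_pow]; field_simp
          have hDD : C / D * D = C := div_mul_cancel₀ C hD.ne'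
          linear_combination (A * (2 * (∑ k ∈ Icc 1 n0, a k * (M:ℝ)⁻¹ ^ k) + C * ((n:ℝ) - 2 * n0))
            * (M / K) ^ (n+1) * K ^ (n+1)) * hDD
            + (A * (2 * (∑ k ∈ Icc 1 n0, a k * (M:ℝ)⁻¹ ^ k) + C * ((n:ℝ) - 2 * n0)) * C) * hMK1
        have hpos : (0:ℝ) < D * K ^ (n+1) := by positivity
        calc g (n+1)
            ≤ A * ∑ k ∈ Icc 1 n, a k * a (n + 1 - k) +
              2 * ∑ k ∈ Icc 2 (n + 2 - 2 * l), (k : ℝ) * a k * g (n + 2 - k) := hrec n hn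
          _ ≤ A * ((2 * S + C * ((n:ℝ) - 2 * n0)) * C * M ^ (n+1)) + 2 * (D * K ^ (n+1) * T) := by
              refine add_le_add ?_ ?_
              · exact mul_le_mul_of_nonneg_left part1 hA.le
              · exact mul_le_mul_of_nonneg_left part2 (by norm_num)
          _ = Ψ n * (D * K ^ (n+1)) := hexp.symm
          _ ≤ Ψ NG * (D * K ^ (n+1)) :=
              mul_le_mul_of_nonneg_right (hΨdec NG n le_rfl hn) hpos.le
          _ ≤ 1 * (D * K ^ (n+1)) := mul_le_mul_of_nonneg_right hkey.le hpos.le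
          _ = D * K ^ (n+1) := one_mul _
  refine ⟨key, fun x hx => ?_⟩
  have hKx : K * |x| < 1 := by
    have := (lt_div_iff₀ hK).1 hx
    linarith [this]
  have hgeo : Summable (fun k : ℕ => D * (K * |x|) ^ k) :=
    (summable_geometric_of_lt_one (by positivity) hKx).mul_left D
  have habs : Summable (fun k : ℕ => |g k * x ^ k|) := by
    refine Summable.of_nonneg_of_le (fun k => abs_nonneg _) (fun k => ?_) hgeo
    rw [abs_mul, abs_pow, abs_of_nonneg (hg k)]
    calc g k * |x| ^ k ≤ D * K ^ k * |x| ^ k :=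
          mul_le_mul_of_nonneg_right (key k) (by positivity)
      _ = D * (K * |x|) ^ k := by rw [mul_pow]; ring
  exact habs.of_abs
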